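/- In the additive setting below with ρ = ρ_max: if y₀ ∈ Ch(ℬ) and x₀ ∈ Ch(𝒜) satisfy I¹_{y₀} ∩ Ch(𝒜) = {x₀}, then |Tf(y₀)| = |f(x₀)| for every f ∈ A. -/

import Mathlib

open scoped ZeroAtInfty Pointwise
open Filter Topology

set_option maxHeartbeats 1000000
set_option synthInstance.maxHeartbeats 1000000

/-- The (inc) property for a two-variable function `φ : ℂ → ℂ → ℝ`. -/
def IncProp (φ : ℂ → ℂ → ℝ) : Prop :=
  (∀ s₁ s₂ t : ℂ, ‖s₁‖ ≤ ‖s₂‖ →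
      φ s₁ t ≤ φ s₂ t ∧ φ t s₁ ≤ φ t s₂) ∧
  (∀ s₁ s₂ t : ℂ, ‖s₁‖ < ‖s₂‖ → t ≠ 0 →
      φ s₁ t < φ s₂ t ∧ φ t s₁ < φ t s₂)

/-- The (con) property. -/
def ConProp (φ : ℂ → ℂ → ℝ) : Prop :=
  ∀ (n : ℕ), 0 < n → ∀ (s : Fin n → ℂ) (t : ℂ),
    φ ((1 / (n : ℂ)) * ∑ i, s i) t ≤ (1 / (n : ℝ)) * ∑ i, φ (s i) t ∧
    φ t ((1 / (n : ℂ)) * ∑ i, s i) ≤ (1 / (n : ℝ)) * ∑ i, φ t (s i)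

/-- sup of φ(f,g) over the space (the supremum norm of the nonnegative function φ(f,g)). -/
noncomputable def supPhi {X : Type*} (φ : ℂ → ℂ → ℝ) (f g : X → ℂ) : ℝ :=
  ⨆ x, φ (f x) (g x)

noncomputable def rhoPlus {X : Type*} (φ : ℂ → ℂ → ℝ) (f g : X → ℂ) : ℝ :=
  supPhi φ f g + supPhi φ g f

noncomputable def rhoMax {X : Type*} (φ : ℂ → ℂ → ℝ) (f g : X → ℂ) : ℝ :=
  max (supPhi φ f g) (supPhi φ g f)

noncomputable def rhoPlusScalar (φ : ℂ → ℂ → ℝ) (r s : ℂ) : ℝ := φ r s + φ s r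

noncomputable def rhoMaxScalar (φ : ℂ → ℂ → ℝ) (r s : ℂ) : ℝ := max (φ r s) (φ s r)

/-- Generic ρ, with a Boolean selecting between ρ₊ (true) and ρ_max (false). -/
noncomputable def rhoGen {X : Type*} (c : Bool) (φ : ℂ → ℂ → ℝ) (f g : X → ℂ) : ℝ :=
  if c then rhoPlus φ f g else rhoMax φ f g

noncomputable def rhoGenScalar (c : Bool) (φ : ℂ → ℂ → ℝ) (r s : ℂ) : ℝ :=
  if c then rhoPlusScalar φ r s else rhoMaxScalar φ r s

/-- `x₀` is a strong boundary point of `A ⊆ C₀(X)`. -/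
def IsStrongBoundaryPoint {X : Type*} [TopologicalSpace X]
    (A : Set C₀(X, ℂ)) (x₀ : X) : Prop :=
  ∀ ε > (0 : ℝ), ∀ V ∈ 𝓝 x₀, ∃ f ∈ A, f x₀ = 1 ∧ ‖f‖ = 1 ∧
    ∀ x ∉ V, ‖f x‖ < ε

/-- V_{x₀}(A). -/
def Vset {X : Type*} [TopologicalSpace X] (A : Set C₀(X, ℂ)) (x₀ : X) : Set C₀(X, ℂ) :=
  {f ∈ A | f x₀ = 1 ∧ ‖f‖ = 1}

/-- F_{x₀}(A). -/
def Fset {X : Type*} [TopologicalSpace X] (A : Set C₀(X, ℂ)) (x₀ : X) : Set C₀(X, ℂ) :=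
  {f ∈ A | ‖f x₀‖ = 1 ∧ ‖f‖ = 1}

/-- The maximum modulus set M(f). -/
def maxSet {X : Type*} [TopologicalSpace X] (f : C₀(X, ℂ)) : Set X :=
  {x | ‖f x‖ = ‖f‖}

/-- Evaluation at a point, as a continuous linear functional on a subspace of C₀(X). -/
noncomputable def evalDual {X : Type*} [TopologicalSpace X]
    (𝒜 : Submodule ℂ C₀(X, ℂ)) (x : X) : StrongDual ℂ 𝒜 :=
  LinearMap.mkContinuous (E := 𝒜)
    { toFun := fun f => (f : C₀(X, ℂ)) x
      map_add' := fun f g => rfl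
      map_smul' := fun c f => rfl }
    1
    (fun f => by
      show ‖(f : C₀(X, ℂ)) x‖ ≤ 1 * ‖f‖
      rw [one_mul]
      exact ((f : C₀(X, ℂ)).toBCF.norm_coe_le_norm x).trans_eq
        ZeroAtInftyContinuousMap.norm_toBCF_eq_norm)

noncomputable instance strongDualSubmoduleSeminormed {X : Type*} [TopologicalSpace X]
    (𝒜 : Submodule ℂ C₀(X, ℂ)) : SeminormedAddCommGroup (StrongDual ℂ 𝒜) :=
  @ContinuousLinearMap.toSeminormedAddCommGroup ℂ ℂ 𝒜 ℂ _ _ _ _ _ _ (RingHom.id ℂ) _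

/-- `x` lies in the Choquet boundary of a subspace `𝒜` of `C₀(X)`: the evaluation functional is
an extreme point of the closed unit ball of the dual space. -/
def InChoquetBoundary {X : Type*} [TopologicalSpace X]
    (𝒜 : Submodule ℂ C₀(X, ℂ)) (x : X) : Prop :=
  evalDual 𝒜 x ∈
    Set.extremePoints ℝ (Metric.closedBall (0 : StrongDual ℂ 𝒜) 1)

/-- A function algebra on `X`: a closed subalgebra of `C₀(X)` strongly separating points. -/
def IsFunctionAlgebra {X : Type*} [TopologicalSpace X]
    (𝒜 : NonUnitalSubalgebra ℂ C₀(X, ℂ)) : Prop :=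
  IsClosed (𝒜 : Set C₀(X, ℂ)) ∧
  (∀ x y : X, x ≠ y → ∃ f ∈ 𝒜, f x ≠ f y) ∧
  (∀ x : X, ∃ g ∈ 𝒜, g x ≠ (0 : ℂ))

/-- `|A| ⊆ |𝒜|`. -/
def ModulusSubset {X : Type*} [TopologicalSpace X]
    (A 𝒜 : Set C₀(X, ℂ)) : Prop :=
  ∀ f ∈ A, ∃ g ∈ 𝒜, ∀ x, ‖f x‖ = ‖g x‖

/-- The positive elements of a subset `S` of `C₀(X)`. -/
def posPartSet {X : Type*} [TopologicalSpace X] (S : Set C₀(X, ℂ)) : Set C₀(X, ℂ) :=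
  {f ∈ S | ∀ x, ∃ r : ℝ, 0 ≤ r ∧ f x = r}

section Aux

variable (φ : ℂ → ℂ → ℝ)

lemma aux_mono (hinc : IncProp φ) {s t : ℂ} {C D : ℝ}
    (hC : ‖s‖ ≤ C) (hD : ‖t‖ ≤ D) :
    φ s t ≤ φ (C : ℂ) (D : ℂ) := by
  have hC0 : 0 ≤ C := (norm_nonneg s).trans hC
  have hD0 : 0 ≤ D := (norm_nonneg t).trans hD
  have h1 : φ s t ≤ φ (C : ℂ) t :=
    (hinc.1 s (C : ℂ) t (by rwa [Complex.norm_real, Real.norm_eq_abs, abs_of_nonneg hC0])).1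
  have h2 : φ (C : ℂ) t ≤ φ (C : ℂ) (D : ℂ) :=
    (hinc.1 t (D : ℂ) (C : ℂ) (by rwa [Complex.norm_real, Real.norm_eq_abs, abs_of_nonneg hD0])).2
  exact h1.trans h2

lemma aux_strictFst (hinc : IncProp φ) {a b c : ℝ} (ha : 0 ≤ a) (hab : a < b) (hc : 0 < c) :
    φ (a : ℂ) (c : ℂ) < φ (b : ℂ) (c : ℂ) :=
  (hinc.2 _ _ _
    (by rw [Complex.norm_real, Real.norm_eq_abs, Complex.norm_real, Real.norm_eq_abs, abs_of_nonneg ha,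
        abs_of_nonneg (ha.trans hab.le)]; exact hab)
    (Complex.ofReal_ne_zero.mpr hc.ne')).1

lemma aux_strictSnd (hinc : IncProp φ) {a b c : ℝ} (ha : 0 ≤ a) (hab : a < b) (hc : 0 < c) :
    φ (c : ℂ) (a : ℂ) < φ (c : ℂ) (b : ℂ) :=
  (hinc.2 _ _ _
    (by rw [Complex.norm_real, Real.norm_eq_abs, Complex.norm_real, Real.norm_eq_abs, abs_of_nonneg ha,
        abs_of_nonneg (ha.trans hab.le)]; exact hab)
    (Complex.ofReal_ne_zero.mpr hc.ne')).2

lemma aux_mod (hinc : IncProp φ) (s t : ℂ) :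
    φ s t = φ ((‖s‖ : ℝ) : ℂ) ((‖t‖ : ℝ) : ℂ) := by
  have hs : ‖((‖s‖ : ℝ) : ℂ)‖ = ‖s‖ := by
    rw [Complex.norm_real, Real.norm_eq_abs, abs_of_nonneg (norm_nonneg s)]
  have ht : ‖((‖t‖ : ℝ) : ℂ)‖ = ‖t‖ := by
    rw [Complex.norm_real, Real.norm_eq_abs, abs_of_nonneg (norm_nonneg t)]
  apply le_antisymm
  · exact ((hinc.1 s _ t hs.ge).1).trans ((hinc.1 t _ _ ht.ge).2)
  · exact ((hinc.1 _ s _ hs.le).1).trans ((hinc.1 _ t s ht.le).2)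

lemma aux_abs_le_norm {Z : Type*} [TopologicalSpace Z] (u : C₀(Z, ℂ)) (z : Z) :
    ‖(u z)‖ ≤ ‖u‖ := by
  exact (u.toBCF.norm_coe_le_norm z).trans_eq ZeroAtInftyContinuousMap.norm_toBCF_eq_norm

lemma aux_bdd {Z : Type*} [TopologicalSpace Z] (hinc : IncProp φ) (u v : C₀(Z, ℂ)) :
    BddAbove (Set.range fun z => φ (u z) (v z)) := by
  refine ⟨φ ((‖u‖ : ℝ) : ℂ) ((‖v‖ : ℝ) : ℂ), ?_⟩
  rintro _ ⟨z, rfl⟩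
  exact aux_mono φ hinc (aux_abs_le_norm u z) (aux_abs_le_norm v z)

lemma aux_le_supPhi {Z : Type*} [TopologicalSpace Z] (hinc : IncProp φ) (u v : C₀(Z, ℂ))
    (z : Z) : φ (u z) (v z) ≤ supPhi φ (fun z => u z) (fun z => v z) :=
  le_ciSup (aux_bdd φ hinc u v) z

lemma aux_split {Z : Type*} [TopologicalSpace Z] [Nonempty Z] (hinc : IncProp φ)
    (u v : C₀(Z, ℂ)) (W : Set Z) {C1 D1 C2 D2 : ℝ}
    (h1 : ∀ z ∈ W, ‖(u z)‖ ≤ C1) (h2 : ∀ z ∈ W, ‖(v z)‖ ≤ D1)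
    (h3 : ∀ z ∉ W, ‖(u z)‖ ≤ C2) (h4 : ∀ z ∉ W, ‖(v z)‖ ≤ D2) :
    supPhi φ (fun z => u z) (fun z => v z) ≤ max (φ (C1 : ℂ) (D1 : ℂ)) (φ (C2 : ℂ) (D2 : ℂ)) := by
  refine ciSup_le fun z => ?_
  by_cases hz : z ∈ W
  · exact le_max_of_le_left (aux_mono φ hinc (h1 z hz) (h2 z hz))
  · exact le_max_of_le_right (aux_mono φ hinc (h3 z hz) (h4 z hz))

lemma aux_supPhi_self {Z : Type*} [TopologicalSpace Z] [Nonempty Z]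
    (hφc : Continuous fun p : ℂ × ℂ => φ p.1 p.2) (hinc : IncProp φ) (u : C₀(Z, ℂ)) :
    supPhi φ (fun z => u z) (fun z => u z) = φ ((‖u‖ : ℝ) : ℂ) ((‖u‖ : ℝ) : ℂ) := by
  apply le_antisymm
  · exact ciSup_le fun z => aux_mono φ hinc (aux_abs_le_norm u z) (aux_abs_le_norm u z)
  · by_contra hlt
    push_neg at hlt
    have hnorm : ‖u‖ = ⨆ z, ‖u z‖ := by
      rw [← ZeroAtInftyContinuousMap.norm_toBCF_eq_norm,
        BoundedContinuousFunction.norm_eq_iSup_norm]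
      rfl
    have hcont : ContinuousAt (fun a : ℝ => φ (a : ℂ) (a : ℂ)) ‖u‖ :=
      (hφc.comp (Complex.continuous_ofReal.prodMk Complex.continuous_ofReal)).continuousAt
    have hmem : (fun a : ℝ => φ (a : ℂ) (a : ℂ)) ⁻¹'
        Set.Ioi (supPhi φ (fun z => u z) fun z => u z) ∈ 𝓝 ‖u‖ := hcont (Ioi_mem_nhds hlt)
    obtain ⟨η, hη, hball⟩ := Metric.mem_nhds_iff.mp hmem
    have hbdd : BddAbove (Set.range fun z => ‖u z‖) := by
      refine ⟨‖u‖, ?_⟩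
      rintro _ ⟨z, rfl⟩
      show ‖u z‖ ≤ ‖u‖
      exact aux_abs_le_norm u z
    have hlt2 : ‖u‖ - η < ⨆ z, ‖u z‖ := by rw [← hnorm]; linarith
    obtain ⟨z, hz⟩ := exists_lt_of_lt_ciSup hlt2
    have hzle : ‖u z‖ ≤ ‖u‖ := by exact aux_abs_le_norm u z
    have hzmem : ‖u z‖ ∈ Metric.ball ‖u‖ η := by
      rw [Metric.mem_ball, Real.dist_eq, abs_of_nonpos (by linarith)]
      linarith
    have hgt := hball hzmem
    have heqv : φ ((‖u z‖ : ℝ) : ℂ) ((‖u z‖ : ℝ) : ℂ) = φ (u z) (u z) := by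
      exact (aux_mod φ hinc _ _).symm
    have hle' : φ ((‖u z‖ : ℝ) : ℂ) ((‖u z‖ : ℝ) : ℂ) ≤
        supPhi φ (fun z => u z) (fun z => u z) := by
      rw [heqv]; exact aux_le_supPhi φ hinc u u z
    exact absurd (lt_of_le_of_lt hle' hgt) (lt_irrefl _)

lemma aux_small {P Q : ℝ → ℝ} (hP : ContinuousAt P 0) (hQ : ContinuousAt Q 0)
    {c c' : ℝ} (h : P 0 < c) (h' : Q 0 < c') :
    ∃ δ : ℝ, 0 < δ ∧ P δ < c ∧ Q δ < c' := by
  have h1 : ∀ᶠ d in 𝓝 (0 : ℝ), P d < c := hP.eventually_lt continuousAt_const h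
  have h2 : ∀ᶠ d in 𝓝 (0 : ℝ), Q d < c' := hQ.eventually_lt continuousAt_const h'
  have h3 : ∀ᶠ d in 𝓝[>] (0 : ℝ), P d < c ∧ Q d < c' :=
    ((h1.and h2).filter_mono nhdsWithin_le_nhds)
  obtain ⟨δ, hδ, hδ0⟩ := (h3.and self_mem_nhdsWithin).exists
  exact ⟨δ, hδ0, hδ⟩

lemma aux_unbounded (hinc : IncProp φ) (hcon : ConProp φ) {b : ℝ} (hb : 0 < b) (M : ℝ) :
    ∃ s : ℝ, 1 ≤ s ∧ M < φ (s : ℂ) (b : ℂ) := by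
  have hd0 : 0 < φ ((1 : ℝ) : ℂ) (b : ℂ) - φ ((0 : ℝ) : ℂ) (b : ℂ) :=
    sub_pos.mpr (aux_strictFst φ hinc le_rfl one_pos hb)
  have hdouble : ∀ a : ℝ,
      2 * φ ((a : ℝ) : ℂ) (b : ℂ) - φ ((0 : ℝ) : ℂ) (b : ℂ) ≤ φ ((2 * a : ℝ) : ℂ) (b : ℂ) := by
    intro a
    have h := (hcon 2 (by norm_num) ![((2 * a : ℝ) : ℂ), 0] (b : ℂ)).1
    simp only [Fin.sum_univ_two, Matrix.cons_val_zero, Matrix.cons_val_one,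
      Matrix.head_cons] at h
    have harg : (1 / ((2 : ℕ) : ℂ)) * (((2 * a : ℝ) : ℂ) + 0) = ((a : ℝ) : ℂ) := by
      push_cast; ring
    rw [harg] at h
    have h0 : ((0 : ℝ) : ℂ) = (0 : ℂ) := by norm_num
    rw [h0]
    have : ((2 : ℕ) : ℝ) = 2 := by norm_num
    rw [this] at h
    linarith
  have hgrow : ∀ n : ℕ, φ ((0 : ℝ) : ℂ) (b : ℂ) +
      2 ^ n * (φ ((1 : ℝ) : ℂ) (b : ℂ) - φ ((0 : ℝ) : ℂ) (b : ℂ)) ≤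
      φ (((2 : ℝ) ^ n : ℝ) : ℂ) (b : ℂ) := by
    intro n
    induction n with
    | zero => simp
    | succ n ih =>
      have h2 := hdouble ((2 : ℝ) ^ n)
      have he : (2 : ℝ) * (2 : ℝ) ^ n = (2 : ℝ) ^ (n + 1) := by ring
      rw [he] at h2
      have : (2 : ℝ) ^ (n + 1) * (φ ((1 : ℝ) : ℂ) (b : ℂ) - φ ((0 : ℝ) : ℂ) (b : ℂ)) =
          2 * (2 ^ n * (φ ((1 : ℝ) : ℂ) (b : ℂ) - φ ((0 : ℝ) : ℂ) (b : ℂ))) := by ring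
      rw [this]
      linarith
  obtain ⟨n, hn⟩ := pow_unbounded_of_one_lt
    ((M - φ ((0 : ℝ) : ℂ) (b : ℂ)) / (φ ((1 : ℝ) : ℂ) (b : ℂ) - φ ((0 : ℝ) : ℂ) (b : ℂ)))
    (one_lt_two (α := ℝ))
  refine ⟨(2 : ℝ) ^ n, one_le_pow₀ one_le_two, ?_⟩
  have hmul := (div_lt_iff₀ hd0).mp hn
  linarith [hgrow n]

lemma aux_core {Z₁ Z₂ : Type*} [TopologicalSpace Z₁] [TopologicalSpace Z₂]
    [Nonempty Z₁] [Nonempty Z₂] (hinc : IncProp φ)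
    (u1 v1 : C₀(Z₁, ℂ)) (u2 v2 : C₀(Z₂, ℂ))
    (heq : rhoMax φ (fun z => u2 z) (fun z => v2 z) = rhoMax φ (fun z => u1 z) (fun z => v1 z))
    (z₁ : Z₁) {P Q : ℝ} (hP : ‖(u1 z₁)‖ = P) (hQ : ‖(v1 z₁)‖ = Q)
    (W : Set Z₂) {C1 D1 C2 D2 : ℝ}
    (h1 : ∀ z ∈ W, ‖(u2 z)‖ ≤ C1) (h2 : ∀ z ∈ W, ‖(v2 z)‖ ≤ D1)
    (h3 : ∀ z ∉ W, ‖(u2 z)‖ ≤ C2) (h4 : ∀ z ∉ W, ‖(v2 z)‖ ≤ D2)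
    (s1 : φ (C1 : ℂ) (D1 : ℂ) < max (φ (P : ℂ) (Q : ℂ)) (φ (Q : ℂ) (P : ℂ)))
    (s2 : φ (C2 : ℂ) (D2 : ℂ) < max (φ (P : ℂ) (Q : ℂ)) (φ (Q : ℂ) (P : ℂ)))
    (s3 : φ (D1 : ℂ) (C1 : ℂ) < max (φ (P : ℂ) (Q : ℂ)) (φ (Q : ℂ) (P : ℂ)))
    (s4 : φ (D2 : ℂ) (C2 : ℂ) < max (φ (P : ℂ) (Q : ℂ)) (φ (Q : ℂ) (P : ℂ))) :
    False := by
  have hlow : max (φ (P : ℂ) (Q : ℂ)) (φ (Q : ℂ) (P : ℂ)) ≤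
      rhoMax φ (fun z => u1 z) (fun z => v1 z) := by
    apply max_le
    · have hpq : φ (P : ℂ) (Q : ℂ) = φ (u1 z₁) (v1 z₁) := by
        rw [aux_mod φ hinc (u1 z₁) (v1 z₁), hP, hQ]
      rw [hpq]
      exact (aux_le_supPhi φ hinc u1 v1 z₁).trans (le_max_left _ _)
    · have hpq : φ (Q : ℂ) (P : ℂ) = φ (v1 z₁) (u1 z₁) := by
        rw [aux_mod φ hinc (v1 z₁) (u1 z₁), hP, hQ]
      rw [hpq]
      exact (aux_le_supPhi φ hinc v1 u1 z₁).trans (le_max_right _ _)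
  have hup : rhoMax φ (fun z => u2 z) (fun z => v2 z) <
      max (φ (P : ℂ) (Q : ℂ)) (φ (Q : ℂ) (P : ℂ)) := by
    apply max_lt
    · exact lt_of_le_of_lt (aux_split φ hinc u2 v2 W h1 h2 h3 h4) (max_lt s1 s2)
    · exact lt_of_le_of_lt (aux_split φ hinc v2 u2 W h2 h1 h4 h3) (max_lt s3 s4)
  exact absurd (hlow.trans heq.symm.le) (not_le.mpr hup)

end Aux

theorem stmt12 {X Y : Type*} [TopologicalSpace X] [LocallyCompactSpace X] [T2Space X] [TopologicalSpace Y] [LocallyCompactSpace Y] [T2Space Y]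
    (φ : ℂ → ℂ → ℝ) (hφc : Continuous fun p : ℂ × ℂ => φ p.1 p.2)
    (hφ0 : ∀ s t : ℂ, 0 ≤ φ s t) (hinc : IncProp φ) (hcon : ConProp φ)
    (A : Set C₀(X, ℂ)) (B : Set C₀(Y, ℂ))
    (hA : (∃ S : Submodule ℂ C₀(X, ℂ), A = (S : Set C₀(X, ℂ))) ∨
          (∃ S : Submodule ℂ C₀(X, ℂ), A = posPartSet (S : Set C₀(X, ℂ))))
    (hB : (∃ S : Submodule ℂ C₀(Y, ℂ), B = (S : Set C₀(Y, ℂ))) ∨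
          (∃ S : Submodule ℂ C₀(Y, ℂ), B = posPartSet (S : Set C₀(Y, ℂ))))
    (𝒜 : NonUnitalSubalgebra ℂ C₀(X, ℂ)) (ℬ : NonUnitalSubalgebra ℂ C₀(Y, ℂ))
    (h𝒜 : IsFunctionAlgebra 𝒜) (hℬ : IsFunctionAlgebra ℬ)
    (hbd𝒜 : ∀ x : X, IsStrongBoundaryPoint A x ↔ InChoquetBoundary 𝒜.toSubmodule x)
    (hbdℬ : ∀ y : Y, IsStrongBoundaryPoint B y ↔ InChoquetBoundary ℬ.toSubmodule y)
    (hmodA : ModulusSubset A (𝒜 : Set C₀(X, ℂ)))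
    (hmodB : ModulusSubset B (ℬ : Set C₀(Y, ℂ)))
    (T : C₀(X, ℂ) → C₀(Y, ℂ)) (hTmaps : Set.MapsTo T A B) (hTsurj : Set.SurjOn T A B)
    (hT : ∀ f ∈ A, ∀ g ∈ A,
      rhoMax φ (fun y => T f y) (fun y => T g y) =
        rhoMax φ (fun x => f x) (fun x => g x))
    (y₀ : Y) (hy₀ : InChoquetBoundary ℬ.toSubmodule y₀)
    (x₀ : X) (hx₀ : InChoquetBoundary 𝒜.toSubmodule x₀)
    (hsingle : (⋂ f ∈ {f : C₀(X, ℂ) | f ∈ A ∧ T f ∈ (1 : ℂ) • Vset B y₀}, maxSet f) ∩ {x : X | InChoquetBoundary 𝒜.toSubmodule x} = {x₀}) :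
    ∀ f ∈ A, ‖(T f y₀)‖ = ‖(f x₀)‖ := by
  haveI : Nonempty X := ⟨x₀⟩
  haveI : Nonempty Y := ⟨y₀⟩
  have hsbA : IsStrongBoundaryPoint A x₀ := (hbd𝒜 x₀).mpr hx₀
  have hsbB : IsStrongBoundaryPoint B y₀ := (hbdℬ y₀).mpr hy₀
  have hφRR : Continuous fun p : ℝ × ℝ => φ (p.1 : ℂ) (p.2 : ℂ) :=
    hφc.comp ((Complex.continuous_ofReal.comp continuous_fst).prodMk
      (Complex.continuous_ofReal.comp continuous_snd))
  have hx0mem : x₀ ∈ ⋂ f ∈ {f : C₀(X, ℂ) | f ∈ A ∧ T f ∈ (1 : ℂ) • Vset B y₀}, maxSet f := by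
    have hmem : x₀ ∈ ({x₀} : Set X) := rfl
    rw [← hsingle] at hmem
    exact hmem.1
  have hmaxx : ∀ g, g ∈ A → T g ∈ Vset B y₀ → ‖(g x₀)‖ = ‖g‖ := by
    intro g hgA hgV
    exact Set.mem_iInter₂.mp hx0mem g ⟨hgA, Set.mem_smul_set.mpr ⟨T g, hgV, one_smul _ _⟩⟩
  have hAsmul : ∀ s : ℝ, 0 < s → ∀ k ∈ A, ((s : ℝ) : ℂ) • k ∈ A := by
    intro s hs k hk
    rcases hA with ⟨S, rfl⟩ | ⟨S, rfl⟩
    · exact S.smul_mem _ hk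
    · refine ⟨S.smul_mem _ hk.1, fun x => ?_⟩
      obtain ⟨r, hr0, hrx⟩ := hk.2 x
      refine ⟨s * r, mul_nonneg hs.le hr0, ?_⟩
      show ((s : ℂ) • k) x = ((s * r : ℝ) : ℂ)
      calc ((s : ℂ) • k) x = (s : ℂ) * k x := rfl
        _ = (s : ℂ) * (r : ℂ) := by rw [hrx]
        _ = ((s * r : ℝ) : ℂ) := by push_cast; ring
  have hBsmul : ∀ s : ℝ, 0 < s → ∀ h ∈ B, ((s : ℝ) : ℂ) • h ∈ B := by
    intro s hs h hh
    rcases hB with ⟨S, rfl⟩ | ⟨S, rfl⟩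
    · exact S.smul_mem _ hh
    · refine ⟨S.smul_mem _ hh.1, fun y => ?_⟩
      obtain ⟨r, hr0, hry⟩ := hh.2 y
      refine ⟨s * r, mul_nonneg hs.le hr0, ?_⟩
      show ((s : ℂ) • h) y = ((s * r : ℝ) : ℂ)
      calc ((s : ℂ) • h) y = (s : ℂ) * h y := rfl
        _ = (s : ℂ) * (r : ℂ) := by rw [hry]
        _ = ((s * r : ℝ) : ℂ) := by push_cast; ring
  have normT : ∀ u, u ∈ A → ‖T u‖ = ‖u‖ := by
    intro u hu
    have h : supPhi φ (fun y => T u y) (fun y => T u y) =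
        supPhi φ (fun x => u x) (fun x => u x) := by
      have h0 := hT u hu u hu
      unfold rhoMax at h0
      simpa using h0
    rw [aux_supPhi_self φ hφc hinc (T u), aux_supPhi_self φ hφc hinc u] at h
    by_contra hne
    rcases lt_or_gt_of_ne hne with hlt | hlt
    · have h1 : φ ((‖T u‖ : ℝ) : ℂ) ((‖T u‖ : ℝ) : ℂ) ≤ φ ((‖u‖ : ℝ) : ℂ) ((‖T u‖ : ℝ) : ℂ) :=
        aux_mono φ hinc
          (by rw [Complex.norm_real, Real.norm_eq_abs, abs_of_nonneg (norm_nonneg _)]; exact hlt.le)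
          (by rw [Complex.norm_real, Real.norm_eq_abs, abs_of_nonneg (norm_nonneg _)])
      have h2 : φ ((‖u‖ : ℝ) : ℂ) ((‖T u‖ : ℝ) : ℂ) < φ ((‖u‖ : ℝ) : ℂ) ((‖u‖ : ℝ) : ℂ) :=
        aux_strictSnd φ hinc (norm_nonneg _) hlt ((norm_nonneg _).trans_lt hlt)
      linarith
    · have h1 : φ ((‖u‖ : ℝ) : ℂ) ((‖u‖ : ℝ) : ℂ) ≤ φ ((‖T u‖ : ℝ) : ℂ) ((‖u‖ : ℝ) : ℂ) :=
        aux_mono φ hinc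
          (by rw [Complex.norm_real, Real.norm_eq_abs, abs_of_nonneg (norm_nonneg _)]; exact hlt.le)
          (by rw [Complex.norm_real, Real.norm_eq_abs, abs_of_nonneg (norm_nonneg _)])
      have h2 : φ ((‖T u‖ : ℝ) : ℂ) ((‖u‖ : ℝ) : ℂ) < φ ((‖T u‖ : ℝ) : ℂ) ((‖T u‖ : ℝ) : ℂ) :=
        aux_strictSnd φ hinc (norm_nonneg _) hlt ((norm_nonneg _).trans_lt hlt)
      linarith
  have claim1 : ∀ r : ℝ, 0 < r → ∀ k, k ∈ A → ‖(k x₀)‖ = r → ‖k‖ = r →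
      ‖(T k y₀)‖ = r := by
    intro r hr k hkA hkx hkn
    have hTkn : ‖T k‖ = r := (normT k hkA).trans hkn
    have hγle : ‖(T k y₀)‖ ≤ r := (aux_abs_le_norm (T k) y₀).trans_eq hTkn
    by_contra hne
    have hγ : ‖(T k y₀)‖ < r := lt_of_le_of_ne hγle hne
    have hγ0 : 0 ≤ ‖(T k y₀)‖ := norm_nonneg _
    obtain ⟨δ, hδ0, hδ1, hδ2⟩ := aux_small
      (P := fun d : ℝ => φ (r : ℂ) ((d : ℝ) : ℂ)) (Q := fun d : ℝ => φ ((d : ℝ) : ℂ) (r : ℂ))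
      ((hφRR.comp (continuous_const.prodMk continuous_id)).continuousAt)
      ((hφRR.comp (continuous_id.prodMk continuous_const)).continuousAt)
      (c := φ (r : ℂ) ((1 : ℝ) : ℂ)) (c' := φ ((1 : ℝ) : ℂ) (r : ℂ))
      (aux_strictSnd φ hinc le_rfl one_pos hr) (aux_strictFst φ hinc le_rfl one_pos hr)
    have hWopen : IsOpen {y | ‖(T k y)‖ <
        ‖(T k y₀)‖ + (r - ‖(T k y₀)‖) / 2} :=
      isOpen_lt (continuous_norm.comp (map_continuous (T k))) continuous_const
    have hWy : y₀ ∈ {y | ‖(T k y)‖ <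
        ‖(T k y₀)‖ + (r - ‖(T k y₀)‖) / 2} := by
      show ‖(T k y₀)‖ < ‖(T k y₀)‖ + (r - ‖(T k y₀)‖) / 2
      linarith
    obtain ⟨h, hhB, hhy, hhn, hhsm⟩ := hsbB δ hδ0 _ (hWopen.mem_nhds hWy)
    obtain ⟨g, hgA, hgT⟩ := hTsurj hhB
    have hTg : ∀ y, T g y = h y := fun y => by rw [hgT]
    have hgV : T g ∈ Vset B y₀ := by rw [hgT]; exact ⟨hhB, hhy, hhn⟩
    have hgn : ‖g‖ = 1 := by rw [← normT g hgA, hgT]; exact hhn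
    have hgx : ‖(g x₀)‖ = 1 := (hmaxx g hgA hgV).trans hgn
    refine aux_core φ hinc k g (T k) (T g) (hT k hkA g hgA) x₀ hkx hgx
      {y | ‖(T k y)‖ < ‖(T k y₀)‖ + (r - ‖(T k y₀)‖) / 2}
      (C1 := ‖(T k y₀)‖ + (r - ‖(T k y₀)‖) / 2) (D1 := 1)
      (C2 := r) (D2 := δ)
      (fun z hz => le_of_lt hz)
      (fun z _ => by rw [hTg z]; exact (aux_abs_le_norm h z).trans hhn.le)
      (fun z _ => (aux_abs_le_norm (T k) z).trans_eq hTkn)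
      (fun z hz => by rw [hTg z]; exact (hhsm z hz).le) ?_ ?_ ?_ ?_
    · exact lt_max_of_lt_left (aux_strictFst φ hinc (by linarith) (by linarith) one_pos)
    · exact lt_max_of_lt_left hδ1
    · exact lt_max_of_lt_right (aux_strictSnd φ hinc (by linarith) (by linarith) one_pos)
    · exact lt_max_of_lt_right hδ2
  have claim2 : ∀ s : ℝ, 0 < s → ∀ g, g ∈ A → ‖(T g y₀)‖ = s → ‖T g‖ = s →
      ‖(g x₀)‖ = s := by
    intro s hs g hgA hgy hgn
    have hgnorm : ‖g‖ = s := (normT g hgA).symm.trans hgn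
    have hmle : ‖(g x₀)‖ ≤ s := (aux_abs_le_norm g x₀).trans_eq hgnorm
    by_contra hne
    have hm : ‖(g x₀)‖ < s := lt_of_le_of_ne hmle hne
    have hm0 : 0 ≤ ‖(g x₀)‖ := norm_nonneg _
    obtain ⟨δ, hδ0, hδ1, hδ2⟩ := aux_small
      (P := fun d : ℝ => φ (s : ℂ) ((d : ℝ) : ℂ)) (Q := fun d : ℝ => φ ((d : ℝ) : ℂ) (s : ℂ))
      ((hφRR.comp (continuous_const.prodMk continuous_id)).continuousAt)
      ((hφRR.comp (continuous_id.prodMk continuous_const)).continuousAt)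
      (c := φ (s : ℂ) ((1 : ℝ) : ℂ)) (c' := φ ((1 : ℝ) : ℂ) (s : ℂ))
      (aux_strictSnd φ hinc le_rfl one_pos hs) (aux_strictFst φ hinc le_rfl one_pos hs)
    have hUopen : IsOpen {x | ‖(g x)‖ <
        ‖(g x₀)‖ + (s - ‖(g x₀)‖) / 2} :=
      isOpen_lt (continuous_norm.comp (map_continuous g)) continuous_const
    have hUx : x₀ ∈ {x | ‖(g x)‖ <
        ‖(g x₀)‖ + (s - ‖(g x₀)‖) / 2} := by
      show ‖(g x₀)‖ < ‖(g x₀)‖ + (s - ‖(g x₀)‖) / 2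
      linarith
    obtain ⟨k, hkA, hkx, hkn, hksm⟩ := hsbA δ hδ0 _ (hUopen.mem_nhds hUx)
    have hkx1 : ‖(k x₀)‖ = 1 := by rw [hkx]; exact norm_one
    have hTk1 : ‖(T k y₀)‖ = 1 := claim1 1 one_pos k hkA hkx1 hkn
    refine aux_core φ hinc (T g) (T k) g k (hT g hgA k hkA).symm y₀ hgy hTk1
      {x | ‖(g x)‖ < ‖(g x₀)‖ + (s - ‖(g x₀)‖) / 2}
      (C1 := ‖(g x₀)‖ + (s - ‖(g x₀)‖) / 2) (D1 := 1)
      (C2 := s) (D2 := δ)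
      (fun z hz => le_of_lt hz)
      (fun z _ => (aux_abs_le_norm k z).trans_eq hkn)
      (fun z _ => (aux_abs_le_norm g z).trans_eq hgnorm)
      (fun z hz => (hksm z hz).le) ?_ ?_ ?_ ?_
    · exact lt_max_of_lt_left (aux_strictFst φ hinc (by linarith) (by linarith) one_pos)
    · exact lt_max_of_lt_left hδ1
    · exact lt_max_of_lt_right (aux_strictSnd φ hinc (by linarith) (by linarith) one_pos)
    · exact lt_max_of_lt_right hδ2
  intro f hf
  have hTfN : ‖T f‖ = ‖f‖ := normT f hf
  have hβ0 : 0 ≤ ‖(f x₀)‖ := norm_nonneg _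
  have hα0 : 0 ≤ ‖(T f y₀)‖ := norm_nonneg _
  have hdir1 : ‖(T f y₀)‖ ≤ ‖(f x₀)‖ := by
    by_contra hc
    push_neg at hc
    have hαpos : 0 < ‖(T f y₀)‖ := hβ0.trans_lt hc
    obtain ⟨s, hs1, hsM⟩ := aux_unbounded φ hinc hcon hαpos
      (max (φ ((‖f‖ : ℝ) : ℂ) ((0 : ℝ) : ℂ)) (φ ((0 : ℝ) : ℂ) ((‖f‖ : ℝ) : ℂ)))
    have hs0 : 0 < s := one_pos.trans_le hs1
    obtain ⟨δ, hδ0, hδ1, hδ2⟩ := aux_small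
      (P := fun d : ℝ => φ ((‖f‖ : ℝ) : ℂ) ((s * d : ℝ) : ℂ))
      (Q := fun d : ℝ => φ ((s * d : ℝ) : ℂ) ((‖f‖ : ℝ) : ℂ))
      ((hφRR.comp (continuous_const.prodMk (continuous_const.mul continuous_id))).continuousAt)
      ((hφRR.comp ((continuous_const.mul continuous_id).prodMk continuous_const)).continuousAt)
      (c := φ ((s : ℝ) : ℂ) ((‖(T f y₀)‖ : ℝ) : ℂ))
      (c' := φ ((s : ℝ) : ℂ) ((‖(T f y₀)‖ : ℝ) : ℂ))
      (by simpa [mul_zero] using (le_max_left _ _).trans_lt hsM)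
      (by simpa [mul_zero] using (le_max_right _ _).trans_lt hsM)
    have hUopen : IsOpen {x | ‖(f x)‖ <
        ‖(f x₀)‖ + (‖(T f y₀)‖ - ‖(f x₀)‖) / 2} :=
      isOpen_lt (continuous_norm.comp (map_continuous f)) continuous_const
    have hUx : x₀ ∈ {x | ‖(f x)‖ <
        ‖(f x₀)‖ + (‖(T f y₀)‖ - ‖(f x₀)‖) / 2} := by
      show ‖(f x₀)‖ <
        ‖(f x₀)‖ + (‖(T f y₀)‖ - ‖(f x₀)‖) / 2
      linarith
    obtain ⟨k, hkA, hkx, hkn, hksm⟩ := hsbA δ hδ0 _ (hUopen.mem_nhds hUx)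
    have hk'A : ((s : ℝ) : ℂ) • k ∈ A := hAsmul s hs0 k hkA
    have hk'x : ‖((((s : ℝ) : ℂ) • k) x₀)‖ = s := by
      show ‖((s : ℂ) * k x₀)‖ = s
      rw [hkx, mul_one, Complex.norm_real, Real.norm_eq_abs, abs_of_pos hs0]
    have hk'n : ‖((s : ℝ) : ℂ) • k‖ = s := by
      have hns := norm_smul ((s : ℝ) : ℂ) k
      rw [hkn, mul_one, Complex.norm_real, Real.norm_eq_abs, abs_of_pos hs0] at hns
      exact hns
    have hTk' : ‖(T (((s : ℝ) : ℂ) • k) y₀)‖ = s := claim1 s hs0 _ hk'A hk'x hk'n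
    refine aux_core φ hinc (T f) (T (((s : ℝ) : ℂ) • k)) f (((s : ℝ) : ℂ) • k)
      (hT f hf _ hk'A).symm y₀ rfl hTk'
      {x | ‖(f x)‖ <
        ‖(f x₀)‖ + (‖(T f y₀)‖ - ‖(f x₀)‖) / 2}
      (C1 := ‖(f x₀)‖ + (‖(T f y₀)‖ - ‖(f x₀)‖) / 2)
      (D1 := s) (C2 := ‖f‖) (D2 := s * δ)
      (fun z hz => le_of_lt hz)
      (fun z _ => (aux_abs_le_norm _ z).trans_eq hk'n)
      (fun z _ => aux_abs_le_norm f z)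
      (fun z hz => by
        show ‖((s : ℂ) * k z)‖ ≤ s * δ
        rw [norm_mul, Complex.norm_real, Real.norm_eq_abs, abs_of_pos hs0]
        exact mul_le_mul_of_nonneg_left (hksm z hz).le hs0.le)
      ?_ ?_ ?_ ?_
    · exact lt_max_of_lt_left (aux_strictFst φ hinc (by linarith) (by linarith) hs0)
    · exact lt_max_of_lt_right hδ1
    · exact lt_max_of_lt_right (aux_strictSnd φ hinc (by linarith) (by linarith) hs0)
    · exact lt_max_of_lt_right hδ2
  have hdir2 : ‖(f x₀)‖ ≤ ‖(T f y₀)‖ := by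
    by_contra hc
    push_neg at hc
    have hβpos : 0 < ‖(f x₀)‖ := hα0.trans_lt hc
    obtain ⟨s, hs1, hsM⟩ := aux_unbounded φ hinc hcon hβpos
      (max (φ ((‖f‖ : ℝ) : ℂ) ((0 : ℝ) : ℂ)) (φ ((0 : ℝ) : ℂ) ((‖f‖ : ℝ) : ℂ)))
    have hs0 : 0 < s := one_pos.trans_le hs1
    obtain ⟨δ, hδ0, hδ1, hδ2⟩ := aux_small
      (P := fun d : ℝ => φ ((‖f‖ : ℝ) : ℂ) ((s * d : ℝ) : ℂ))
      (Q := fun d : ℝ => φ ((s * d : ℝ) : ℂ) ((‖f‖ : ℝ) : ℂ))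
      ((hφRR.comp (continuous_const.prodMk (continuous_const.mul continuous_id))).continuousAt)
      ((hφRR.comp ((continuous_const.mul continuous_id).prodMk continuous_const)).continuousAt)
      (c := φ ((s : ℝ) : ℂ) ((‖(f x₀)‖ : ℝ) : ℂ))
      (c' := φ ((s : ℝ) : ℂ) ((‖(f x₀)‖ : ℝ) : ℂ))
      (by simpa [mul_zero] using (le_max_left _ _).trans_lt hsM)
      (by simpa [mul_zero] using (le_max_right _ _).trans_lt hsM)
    have hWopen : IsOpen {y | ‖(T f y)‖ <
        ‖(T f y₀)‖ + (‖(f x₀)‖ - ‖(T f y₀)‖) / 2} :=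
      isOpen_lt (continuous_norm.comp (map_continuous (T f))) continuous_const
    have hWy : y₀ ∈ {y | ‖(T f y)‖ <
        ‖(T f y₀)‖ + (‖(f x₀)‖ - ‖(T f y₀)‖) / 2} := by
      show ‖(T f y₀)‖ <
        ‖(T f y₀)‖ + (‖(f x₀)‖ - ‖(T f y₀)‖) / 2
      linarith
    obtain ⟨h, hhB, hhy, hhn, hhsm⟩ := hsbB δ hδ0 _ (hWopen.mem_nhds hWy)
    have hh'B : ((s : ℝ) : ℂ) • h ∈ B := hBsmul s hs0 h hhB
    obtain ⟨g, hgA, hgT⟩ := hTsurj hh'B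
    have hTgapp : ∀ y, T g y = (s : ℂ) * h y := fun y => by rw [hgT]; rfl
    have hTgy : ‖(T g y₀)‖ = s := by
      rw [hTgapp, hhy, mul_one, Complex.norm_real, Real.norm_eq_abs, abs_of_pos hs0]
    have hTgn : ‖T g‖ = s := by
      have hns := norm_smul ((s : ℝ) : ℂ) h
      rw [hhn, mul_one, Complex.norm_real, Real.norm_eq_abs, abs_of_pos hs0] at hns
      rw [hgT]
      exact hns
    have hgx : ‖(g x₀)‖ = s := claim2 s hs0 g hgA hTgy hTgn
    refine aux_core φ hinc f g (T f) (T g) (hT f hf g hgA) x₀ rfl hgx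
      {y | ‖(T f y)‖ <
        ‖(T f y₀)‖ + (‖(f x₀)‖ - ‖(T f y₀)‖) / 2}
      (C1 := ‖(T f y₀)‖ + (‖(f x₀)‖ - ‖(T f y₀)‖) / 2)
      (D1 := s) (C2 := ‖f‖) (D2 := s * δ)
      (fun z hz => le_of_lt hz)
      (fun z _ => (aux_abs_le_norm (T g) z).trans_eq hTgn)
      (fun z _ => (aux_abs_le_norm (T f) z).trans_eq hTfN)
      (fun z hz => by
        rw [hTgapp z, norm_mul, Complex.norm_real, Real.norm_eq_abs, abs_of_pos hs0]
        exact mul_le_mul_of_nonneg_left (hhsm z hz).le hs0.le)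
      ?_ ?_ ?_ ?_
    · exact lt_max_of_lt_left (aux_strictFst φ hinc (by linarith) (by linarith) hs0)
    · exact lt_max_of_lt_right hδ1
    · exact lt_max_of_lt_right (aux_strictSnd φ hinc (by linarith) (by linarith) hs0)
    · exact lt_max_of_lt_right hδ2
  exact le_antisymm hdir1 hdir2
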